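/- arXiv:2410.16112 — 3 statements merged into one kernel-verified Lean document; each statement's English description precedes it below -/
import Mathlib

section
/- Bias correction term for the lagged-outcome moment (Lemma 'Bias Correction Terms', first component): E[(1/T)·Σ_{t=1}^{T} Ỹ_{t-1}·ε̃_t] = −(σ_ε²/T²)·Σ_{l=0}^{T-2} Σ_{j=0}^{l} φ^j. -/
open Finset MeasureTheory ProbabilityTheory


lemma int_mul_of_L2 {Ω : Type*} [MeasurableSpace Ω] {μ : Measure Ω} {f g : Ω → ℝ}
    (hf : MemLp f 2 μ) (hg : MemLp g 2 μ) : Integrable (fun ω => f ω * g ω) μ := by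
  have h : MemLp (f • g) 1 μ := hg.smul hf
  have := memLp_one_iff_integrable.mp h
  exact this

lemma sum_pow_reindex (φ : ℝ) (n : ℕ) :
    ∑ t ∈ Icc 1 n, φ ^ (n - t) = ∑ j ∈ range n, φ ^ j := by
  rw [← Finset.Ico_add_one_right_eq_Icc, Finset.sum_Ico_eq_sum_range]
  rw [show n + 1 - 1 = n from rfl, ← Finset.sum_range_reflect (fun j => φ ^ j) n]
  exact Finset.sum_congr rfl fun i hi => by congr 1; omega

lemma demean_sum (T : ℕ) (hT : 0 < T) (A B : ℕ → ℝ) :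
    ∑ t ∈ Icc 1 T, (A t - (1/(T:ℝ)) * ∑ s ∈ Icc 1 T, A s) * (B t - (1/(T:ℝ)) * ∑ s ∈ Icc 1 T, B s)
      = (∑ t ∈ Icc 1 T, A t * B t)
        - (1/(T:ℝ)) * ((∑ s ∈ Icc 1 T, A s) * ∑ s ∈ Icc 1 T, B s) := by
  have hT0 : (T:ℝ) ≠ 0 := Nat.cast_ne_zero.mpr hT.ne'
  have hc : ((Icc 1 T).card : ℝ) = T := by simp [Nat.card_Icc]
  set SA := ∑ s ∈ Icc 1 T, A s with hSA
  set SB := ∑ s ∈ Icc 1 T, B s with hSB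
  have expand : ∀ t, (A t - (1/(T:ℝ))*SA)*(B t - (1/(T:ℝ))*SB)
      = A t * B t - ((1/(T:ℝ))*SB) * A t - ((1/(T:ℝ))*SA) * B t
        + ((1/(T:ℝ))*SA)*((1/(T:ℝ))*SB) := fun t => by ring
  simp only [expand]
  rw [Finset.sum_add_distrib, Finset.sum_sub_distrib, Finset.sum_sub_distrib,
    ← Finset.mul_sum, ← Finset.mul_sum, Finset.sum_const, nsmul_eq_mul, hc, ← hSA, ← hSB]
  field_simp
  ring

/-- Bias correction term for the lagged-outcome moment (first component of the Lemma
"Bias Correction Terms"):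
`E[(1/T)·Σ_{t=1}^{T} Ỹ_{t-1}·ε̃_t] = −(σ_ε²/T²)·Σ_{l=0}^{T-2} Σ_{j=0}^{l} φ^j`. -/
theorem bias_correction_term_rho1 {Ω : Type*} [MeasurableSpace Ω]
    (μ : Measure Ω) [IsProbabilityMeasure μ] (T : ℕ) (hT : 2 ≤ T)
    (ρ₁ τ ρ₂ φ a c Y₀ σε2 σu2 : ℝ) (hφ : φ = ρ₁ + τ * ρ₂)
    (ε u : ℕ → Ω → ℝ)
    (hεmeas : ∀ t, Measurable (ε t)) (humeas : ∀ t, Measurable (u t))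
    (hεL2 : ∀ t : ℕ, 1 ≤ t → t ≤ T → MemLp (ε t) 2 μ)
    (huL2 : ∀ t : ℕ, 1 ≤ t → t ≤ T → MemLp (u t) 2 μ)
    (hindep : iIndepFun
      (Sum.elim (fun t : Fin T => ε (t + 1)) (fun t : Fin T => u (t + 1))) μ)
    (hεmean : ∀ t : ℕ, 1 ≤ t → t ≤ T → ∫ ω, ε t ω ∂μ = 0)
    (humean : ∀ t : ℕ, 1 ≤ t → t ≤ T → ∫ ω, u t ω ∂μ = 0)
    (hεvar : ∀ t : ℕ, 1 ≤ t → t ≤ T → ∫ ω, (ε t ω) ^ 2 ∂μ = σε2)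
    (huvar : ∀ t : ℕ, 1 ≤ t → t ≤ T → ∫ ω, (u t ω) ^ 2 ∂μ = σu2)
    (Y D : ℕ → Ω → ℝ) (hY0 : ∀ ω, Y 0 ω = Y₀)
    (hD : ∀ t : ℕ, 1 ≤ t → t ≤ T → ∀ ω, D t ω = c + ρ₂ * Y (t - 1) ω + u t ω)
    (hY : ∀ t : ℕ, 1 ≤ t → t ≤ T → ∀ ω,
      Y t ω = a + ρ₁ * Y (t - 1) ω + τ * D t ω + ε t ω) :
    ∫ ω, (1 / (T : ℝ)) * ∑ t ∈ Icc 1 T,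
        (Y (t - 1) ω - (1 / (T : ℝ)) * ∑ s ∈ Icc 1 T, Y (s - 1) ω)
          * (ε t ω - (1 / (T : ℝ)) * ∑ s ∈ Icc 1 T, ε s ω) ∂μ
      = -(σε2 / (T : ℝ) ^ 2) * ∑ l ∈ range (T - 1), ∑ j ∈ range (l + 1), φ ^ j := by
  have hT0 : 0 < T := by omega
  have hT0' : (T:ℝ) ≠ 0 := Nat.cast_ne_zero.mpr hT0.ne'
  -- explicit representation of Y
  have hrep : ∀ s, s ≤ T → ∃ ms : ℝ, ∀ ω,
      Y s ω = ms + ∑ j ∈ Icc 1 s, φ ^ (s - j) * (ε j ω + τ * u j ω) := by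
    intro s
    induction s with
    | zero => exact fun _ => ⟨Y₀, fun ω => by simp [hY0 ω]⟩
    | succ n ih =>
      intro hn
      obtain ⟨ms, hms⟩ := ih (by omega)
      refine ⟨a + τ * c + φ * ms, fun ω => ?_⟩
      have h1 : 1 ≤ n + 1 := by omega
      rw [hY (n+1) h1 hn ω, hD (n+1) h1 hn ω]
      simp only [Nat.add_sub_cancel]
      rw [hms ω, Finset.sum_Icc_succ_top h1]
      have hsum : ∑ j ∈ Icc 1 n, φ ^ (n + 1 - j) * (ε j ω + τ * u j ω)
          = φ * ∑ j ∈ Icc 1 n, φ ^ (n - j) * (ε j ω + τ * u j ω) := by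
        rw [Finset.mul_sum]
        refine Finset.sum_congr rfl fun j hj => ?_
        have hj' : j ≤ n := (Finset.mem_Icc.mp hj).2
        have : n + 1 - j = (n - j) + 1 := by omega
        rw [this, pow_succ]; ring
      rw [hsum]
      simp only [Nat.add_sub_cancel, Nat.sub_self, pow_zero, hφ]
      ring
  -- L2 membership
  have hYL2 : ∀ s, s ≤ T → MemLp (Y s) 2 μ := by
    intro s hs
    obtain ⟨ms, hms⟩ := hrep s hs
    have h2 : MemLp (fun ω => ms + ∑ j ∈ Icc 1 s, φ ^ (s - j) * (ε j ω + τ * u j ω)) 2 μ := by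
      refine (memLp_const ms).add ?_
      refine memLp_finset_sum _ fun j hj => ?_
      obtain ⟨hj1, hj2⟩ := Finset.mem_Icc.mp hj
      exact ((hεL2 j hj1 (hj2.trans hs)).add
        ((huL2 j hj1 (hj2.trans hs)).const_mul τ)).const_mul _
    exact h2.ae_eq (Filter.Eventually.of_forall fun ω => (hms ω).symm)
  -- zero cross moments
  have hεε : ∀ j t, 1 ≤ j → j ≤ T → 1 ≤ t → t ≤ T →
      ∫ ω, ε j ω * ε t ω ∂μ = if j = t then σε2 else 0 := by
    intro j t hj1 hjT ht1 htT
    by_cases hjt : j = t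
    · subst hjt
      simp only [if_pos rfl]
      rw [← hεvar j hj1 hjT]
      exact integral_congr_ae (Filter.Eventually.of_forall fun ω => (pow_two (ε j ω)).symm)
    · simp only [if_neg hjt]
      have hne : (Sum.inl ⟨j-1, by omega⟩ : Fin T ⊕ Fin T) ≠ Sum.inl ⟨t-1, by omega⟩ := by
        simp only [ne_eq, Sum.inl.injEq, Fin.mk.injEq]
        omega
      have h := hindep.indepFun hne
      simp only [Sum.elim_inl] at h
      have h' : IndepFun (ε j) (ε t) μ := by
        simpa [Nat.sub_add_cancel hj1, Nat.sub_add_cancel ht1] using h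
      rw [h'.integral_fun_mul_eq_mul_integral (hεmeas j).aestronglyMeasurable (hεmeas t).aestronglyMeasurable,
        hεmean t ht1 htT, mul_zero]
  have huε : ∀ j t, 1 ≤ j → j ≤ T → 1 ≤ t → t ≤ T →
      ∫ ω, u j ω * ε t ω ∂μ = 0 := by
    intro j t hj1 hjT ht1 htT
    have hne : (Sum.inr ⟨j-1, by omega⟩ : Fin T ⊕ Fin T) ≠ Sum.inl ⟨t-1, by omega⟩ :=
      Sum.inr_ne_inl
    have h := hindep.indepFun hne
    simp only [Sum.elim_inl, Sum.elim_inr] at h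
    have h' : IndepFun (u j) (ε t) μ := by
      simpa [Nat.sub_add_cancel hj1, Nat.sub_add_cancel ht1] using h
    rw [h'.integral_fun_mul_eq_mul_integral (humeas j).aestronglyMeasurable (hεmeas t).aestronglyMeasurable,
      hεmean t ht1 htT, mul_zero]
  -- key moment
  have hYε : ∀ s t, s ≤ T → 1 ≤ t → t ≤ T →
      ∫ ω, Y s ω * ε t ω ∂μ = if t ≤ s then φ ^ (s - t) * σε2 else 0 := by
    intro s t hs ht1 htT
    obtain ⟨ms, hms⟩ := hrep s hs
    have heq : ∀ ω, Y s ω * ε t ω = ms * ε t ω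
        + ∑ j ∈ Icc 1 s, (φ ^ (s - j) * (ε j ω * ε t ω)
            + (φ ^ (s - j) * τ) * (u j ω * ε t ω)) := by
      intro ω
      rw [hms ω, add_mul, Finset.sum_mul]
      congr 1
      exact Finset.sum_congr rfl fun j _ => by ring
    rw [integral_congr_ae (Filter.Eventually.of_forall heq)]
    have hint1 : Integrable (fun ω => ms * ε t ω) μ :=
      ((hεL2 t ht1 htT).integrable one_le_two).const_mul ms
    have hint2 : ∀ j ∈ Icc 1 s, Integrable (fun ω => φ ^ (s - j) * (ε j ω * ε t ω)
        + (φ ^ (s - j) * τ) * (u j ω * ε t ω)) μ := by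
      intro j hj
      obtain ⟨hj1, hj2⟩ := Finset.mem_Icc.mp hj
      exact ((int_mul_of_L2 (hεL2 j hj1 (hj2.trans hs)) (hεL2 t ht1 htT)).const_mul _).add
        ((int_mul_of_L2 (huL2 j hj1 (hj2.trans hs)) (hεL2 t ht1 htT)).const_mul _)
    rw [integral_add hint1 (integrable_finset_sum _ hint2), integral_finset_sum _ hint2,
      integral_const_mul, hεmean t ht1 htT, mul_zero, zero_add]
    have hterm : ∀ j ∈ Icc 1 s,
        ∫ ω, (φ ^ (s - j) * (ε j ω * ε t ω) + (φ ^ (s - j) * τ) * (u j ω * ε t ω)) ∂μ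
          = if j = t then φ ^ (s - j) * σε2 else 0 := by
      intro j hj
      obtain ⟨hj1, hj2⟩ := Finset.mem_Icc.mp hj
      rw [integral_add ((int_mul_of_L2 (hεL2 j hj1 (hj2.trans hs)) (hεL2 t ht1 htT)).const_mul _)
          ((int_mul_of_L2 (huL2 j hj1 (hj2.trans hs)) (hεL2 t ht1 htT)).const_mul _),
        integral_const_mul, integral_const_mul, hεε j t hj1 (hj2.trans hs) ht1 htT,
        huε j t hj1 (hj2.trans hs) ht1 htT, mul_zero, add_zero]
      by_cases h : j = t <;> simp [h]
    rw [Finset.sum_congr rfl hterm]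
    rw [Finset.sum_ite_eq' (Icc 1 s) t (fun j => φ ^ (s - j) * σε2)]
    by_cases h : t ≤ s
    · rw [if_pos (Finset.mem_Icc.mpr ⟨ht1, h⟩), if_pos h]
    · rw [if_neg (fun hc => h (Finset.mem_Icc.mp hc).2), if_neg h]
  -- pointwise rewrite of integrand
  have hpt : ∀ ω : Ω, (1 / (T : ℝ)) * ∑ t ∈ Icc 1 T,
        (Y (t - 1) ω - (1 / (T : ℝ)) * ∑ s ∈ Icc 1 T, Y (s - 1) ω)
          * (ε t ω - (1 / (T : ℝ)) * ∑ s ∈ Icc 1 T, ε s ω)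
      = (∑ t ∈ Icc 1 T, (1 / (T : ℝ)) * (Y (t - 1) ω * ε t ω))
        - ∑ s ∈ Icc 1 T, ∑ t ∈ Icc 1 T, (1 / (T : ℝ)^2) * (Y (s - 1) ω * ε t ω) := by
    intro ω
    rw [demean_sum T hT0 (fun t => Y (t - 1) ω) (fun t => ε t ω)]
    rw [Finset.sum_mul_sum]
    simp only [← Finset.mul_sum]
    field_simp
    simp only [← Finset.sum_mul, ← Finset.mul_sum]
    ring
  rw [integral_congr_ae (Filter.Eventually.of_forall hpt)]
  have hYint : ∀ s t, s ≤ T → 1 ≤ t → t ≤ T →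
      Integrable (fun ω => Y s ω * ε t ω) μ := fun s t hs ht1 htT =>
    int_mul_of_L2 (hYL2 s hs) (hεL2 t ht1 htT)
  have hint1 : ∀ t ∈ Icc 1 T, Integrable (fun ω => (1 / (T : ℝ)) * (Y (t - 1) ω * ε t ω)) μ := by
    intro t ht
    obtain ⟨ht1, htT⟩ := Finset.mem_Icc.mp ht
    exact (hYint (t-1) t (by omega) ht1 htT).const_mul _
  have hint2 : ∀ s ∈ Icc 1 T, ∀ t ∈ Icc 1 T,
      Integrable (fun ω => (1 / (T : ℝ)^2) * (Y (s - 1) ω * ε t ω)) μ := by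
    intro s hs t ht
    obtain ⟨hs1, hsT⟩ := Finset.mem_Icc.mp hs
    obtain ⟨ht1, htT⟩ := Finset.mem_Icc.mp ht
    exact (hYint (s-1) t (by omega) ht1 htT).const_mul _
  rw [integral_sub (integrable_finset_sum _ hint1)
      (integrable_finset_sum _ fun s hs => integrable_finset_sum _ (hint2 s hs)),
    integral_finset_sum _ hint1,
    integral_finset_sum _ fun s hs => integrable_finset_sum _ (hint2 s hs)]
  have hz1 : ∀ t ∈ Icc 1 T, ∫ ω, (1 / (T : ℝ)) * (Y (t - 1) ω * ε t ω) ∂μ = 0 := by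
    intro t ht
    obtain ⟨ht1, htT⟩ := Finset.mem_Icc.mp ht
    rw [integral_const_mul, hYε (t-1) t (by omega) ht1 htT, if_neg (by omega), mul_zero]
  rw [Finset.sum_congr rfl hz1, Finset.sum_const_zero, zero_sub]
  have hz2 : ∀ s ∈ Icc 1 T, ∫ ω, ∑ t ∈ Icc 1 T, (1 / (T : ℝ)^2) * (Y (s - 1) ω * ε t ω) ∂μ
      = (σε2 / (T:ℝ)^2) * ∑ j ∈ range (s - 1), φ ^ j := by
    intro s hs
    obtain ⟨hs1, hsT⟩ := Finset.mem_Icc.mp hs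
    rw [integral_finset_sum _ (hint2 s hs)]
    have hstep : ∀ t ∈ Icc 1 T, ∫ ω, (1 / (T : ℝ)^2) * (Y (s - 1) ω * ε t ω) ∂μ
        = (σε2 / (T:ℝ)^2) * (if t ≤ s - 1 then φ ^ (s - 1 - t) else 0) := by
      intro t ht
      obtain ⟨ht1, htT⟩ := Finset.mem_Icc.mp ht
      rw [integral_const_mul, hYε (s-1) t (by omega) ht1 htT]
      by_cases h : t ≤ s - 1 <;> simp [h] <;> ring
    rw [Finset.sum_congr rfl hstep, ← Finset.mul_sum]
    congr 1
    rw [← Finset.sum_filter]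
    have hfil : (Icc 1 T).filter (fun t => t ≤ s - 1) = Icc 1 (s - 1) := by
      ext x
      simp only [Finset.mem_filter, Finset.mem_Icc]
      omega
    rw [hfil, sum_pow_reindex φ (s - 1)]
  rw [Finset.sum_congr rfl hz2, ← Finset.mul_sum]
  have hfin : ∑ s ∈ Icc 1 T, ∑ j ∈ range (s - 1), φ ^ j
      = ∑ l ∈ range (T - 1), ∑ j ∈ range (l + 1), φ ^ j := by
    rw [← Finset.Ico_add_one_right_eq_Icc, Finset.sum_Ico_eq_sum_range,
      show T + 1 - 1 = T from rfl, show T = (T - 1) + 1 by omega, Finset.sum_range_succ']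
    simp only [Nat.add_sub_cancel]
    norm_num
  rw [hfin]
  ring
end

section
/- Bias correction term for the treatment-equation moment (Lemma 'Bias Correction Terms', third component): E[(1/T)·Σ_{t=1}^{T} Ỹ_{t-1}·ũ_t] = −τ·(σ_u²/T²)·Σ_{l=0}^{T-2} Σ_{j=0}^{l} φ^j. -/
open Finset MeasureTheory ProbabilityTheory

theorem aux_mul_int {Ω : Type*} [MeasurableSpace Ω] (μ : Measure Ω) [IsFiniteMeasure μ]
    (f g : Ω → ℝ)
    (hf : MemLp f 2 μ) (hg : MemLp g 2 μ) : Integrable (fun ω => f ω * g ω) μ := by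
  haveI : ENNReal.HolderTriple 2 2 1 := ⟨by rw [ENNReal.inv_two_add_inv_two, inv_one]⟩
  have h := (MemLp.smul hg hf (p := 2) (q := 2) (r := 1)).integrable le_rfl
  exact h

theorem aux_pow_sum (n : ℕ) (φ : ℝ) : ∑ t ∈ Icc 1 n, φ^(n-t) = ∑ j ∈ range n, φ^j := by
  induction n with
  | zero => simp
  | succ n ih =>
    rw [Finset.sum_Icc_succ_top (by omega : 1 ≤ n+1), Finset.sum_range_succ']
    have h1 : ∑ t ∈ Icc 1 n, φ^(n+1-t) = φ * ∑ t ∈ Icc 1 n, φ^(n-t) := by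
      rw [Finset.mul_sum]
      refine Finset.sum_congr rfl fun t ht => ?_
      have : n+1-t = (n-t)+1 := by simp [Finset.mem_Icc] at ht; omega
      rw [this, pow_succ]; ring
    rw [h1, ih, Finset.mul_sum]
    simp [pow_succ, mul_comm]

theorem aux_reindex (T : ℕ) (f : ℕ → ℝ) :
    ∑ s ∈ Icc 1 T, ∑ j ∈ range (s-1), f j
      = ∑ l ∈ range (T-1), ∑ j ∈ range (l+1), f j := by
  induction T with
  | zero => simp
  | succ T ih =>
    rw [Finset.sum_Icc_succ_top (by omega : 1 ≤ T+1), ih]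
    rcases Nat.eq_zero_or_pos T with h | h
    · subst h; simp
    · have h2 : T = (T-1) + 1 := by omega
      have h3 : T + 1 - 1 = T := rfl
      rw [h3]
      conv_rhs => rw [h2, Finset.sum_range_succ]
      rw [← h2]

/-- Bias correction term for the treatment-equation moment (third component of the Lemma
"Bias Correction Terms"):
`E[(1/T)·Σ_{t=1}^{T} Ỹ_{t-1}·ũ_t] = −τ·(σ_u²/T²)·Σ_{l=0}^{T-2} Σ_{j=0}^{l} φ^j`. -/
theorem bias_correction_term_rho2 {Ω : Type*} [MeasurableSpace Ω]
    (μ : Measure Ω) [IsProbabilityMeasure μ] (T : ℕ) (hT : 2 ≤ T)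
    (ρ₁ τ ρ₂ φ a c Y₀ σε2 σu2 : ℝ) (hφ : φ = ρ₁ + τ * ρ₂)
    (ε u : ℕ → Ω → ℝ)
    (hεmeas : ∀ t, Measurable (ε t)) (humeas : ∀ t, Measurable (u t))
    (hεL2 : ∀ t : ℕ, 1 ≤ t → t ≤ T → MemLp (ε t) 2 μ)
    (huL2 : ∀ t : ℕ, 1 ≤ t → t ≤ T → MemLp (u t) 2 μ)
    (hindep : iIndepFun
      (Sum.elim (fun t : Fin T => ε (t + 1)) (fun t : Fin T => u (t + 1))) μ)
    (hεmean : ∀ t : ℕ, 1 ≤ t → t ≤ T → ∫ ω, ε t ω ∂μ = 0)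
    (humean : ∀ t : ℕ, 1 ≤ t → t ≤ T → ∫ ω, u t ω ∂μ = 0)
    (hεvar : ∀ t : ℕ, 1 ≤ t → t ≤ T → ∫ ω, (ε t ω) ^ 2 ∂μ = σε2)
    (huvar : ∀ t : ℕ, 1 ≤ t → t ≤ T → ∫ ω, (u t ω) ^ 2 ∂μ = σu2)
    (Y D : ℕ → Ω → ℝ) (hY0 : ∀ ω, Y 0 ω = Y₀)
    (hD : ∀ t : ℕ, 1 ≤ t → t ≤ T → ∀ ω, D t ω = c + ρ₂ * Y (t - 1) ω + u t ω)
    (hY : ∀ t : ℕ, 1 ≤ t → t ≤ T → ∀ ω,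
      Y t ω = a + ρ₁ * Y (t - 1) ω + τ * D t ω + ε t ω):
    ∫ ω, (1 / (T : ℝ)) * ∑ t ∈ Icc 1 T,
        (Y (t - 1) ω - (1 / (T : ℝ)) * ∑ s ∈ Icc 1 T, Y (s - 1) ω)
          * (u t ω - (1 / (T : ℝ)) * ∑ s ∈ Icc 1 T, u s ω) ∂μ
      = -τ * (σu2 / (T : ℝ) ^ 2) * ∑ l ∈ range (T - 1), ∑ j ∈ range (l + 1), φ ^ j := by
  have hT0 : (T : ℝ) ≠ 0 := by
    have : T ≠ 0 := by omega
    exact_mod_cast this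
  set M : ℕ → ℝ := fun k => (a + τ*c) * (∑ j ∈ range k, φ^j) + φ^k * Y₀ with hM
  -- recurrence
  have hrec : ∀ t, 1 ≤ t → t ≤ T → ∀ ω,
      Y t ω = (a + τ*c) + φ * Y (t-1) ω + (τ * u t ω + ε t ω) := by
    intro t h1 h2 ω
    rw [hY t h1 h2 ω, hD t h1 h2 ω, hφ]; ring
  -- explicit representation
  have hrep : ∀ k, k ≤ T → ∀ ω,
      Y k ω = M k + ∑ i ∈ Icc 1 k, φ^(k-i) * (τ * u i ω + ε i ω) := by
    intro k
    induction k with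
    | zero => intro _ ω; simp [hM, hY0 ω]
    | succ k ih =>
      intro hk ω
      have hk' : k ≤ T := by omega
      have h1 : (k+1) - 1 = k := rfl
      rw [hrec (k+1) (by omega) hk ω, h1, ih hk' ω,
        Finset.sum_Icc_succ_top (by omega : 1 ≤ k+1)]
      have hMs : M (k+1) = (a + τ*c) + φ * M k := by
        have hgeo : ∑ j ∈ range (k+1), φ^j = 1 + φ * ∑ j ∈ range k, φ^j := by
          rw [Finset.sum_range_succ', Finset.mul_sum, pow_zero]
          rw [add_comm]
          congr 1
          exact Finset.sum_congr rfl fun i _ => by rw [pow_succ]; ring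
        simp only [hM]
        rw [hgeo, pow_succ]; ring
      have hsum : ∑ i ∈ Icc 1 k, φ^(k+1-i) * (τ * u i ω + ε i ω)
          = φ * ∑ i ∈ Icc 1 k, φ^(k-i) * (τ * u i ω + ε i ω) := by
        rw [Finset.mul_sum]
        refine Finset.sum_congr rfl fun i hi => ?_
        have : k+1-i = (k-i)+1 := by simp [Finset.mem_Icc] at hi; omega
        rw [this, pow_succ]; ring
      rw [hMs, hsum]
      simp only [Nat.sub_self, pow_zero]
      ring
  -- L2 of Y
  have hYL2 : ∀ k, k ≤ T → MemLp (Y k) 2 μ := by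
    intro k hk
    have hfe : Y k = fun ω => M k + ∑ i ∈ Icc 1 k, φ^(k-i) * (τ * u i ω + ε i ω) :=
      funext (hrep k hk)
    rw [hfe]
    have hs : MemLp (fun ω => ∑ i ∈ Icc 1 k, φ^(k-i) * (τ * u i ω + ε i ω)) 2 μ := by
      refine memLp_finset_sum (Icc 1 k) fun i hi => ?_
      have h1 : 1 ≤ i := (Finset.mem_Icc.mp hi).1
      have h2 : i ≤ T := le_trans (Finset.mem_Icc.mp hi).2 hk
      exact (((huL2 i h1 h2).const_mul τ).add (hεL2 i h1 h2)).const_mul _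
    exact (memLp_const (M k)).add hs
  -- independence facts
  have hIuu : ∀ i s, 1 ≤ i → i ≤ T → 1 ≤ s → s ≤ T → i ≠ s → IndepFun (u i) (u s) μ := by
    intro i s hi1 hi2 hs1 hs2 hne
    have h1 : i - 1 < T := by omega
    have h2 : s - 1 < T := by omega
    have hne' : (Sum.inr ⟨i-1, h1⟩ : Fin T ⊕ Fin T) ≠ Sum.inr ⟨s-1, h2⟩ := by
      simp only [ne_eq, Sum.inr.injEq, Fin.mk.injEq]; omega
    have h := hindep.indepFun hne'
    simpa [Nat.sub_add_cancel hi1, Nat.sub_add_cancel hs1] using h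
  have hIεu : ∀ i s, 1 ≤ i → i ≤ T → 1 ≤ s → s ≤ T → IndepFun (ε i) (u s) μ := by
    intro i s hi1 hi2 hs1 hs2
    have h1 : i - 1 < T := by omega
    have h2 : s - 1 < T := by omega
    have hne' : (Sum.inl ⟨i-1, h1⟩ : Fin T ⊕ Fin T) ≠ Sum.inr ⟨s-1, h2⟩ := by simp
    have h := hindep.indepFun hne'
    simpa [Nat.sub_add_cancel hi1, Nat.sub_add_cancel hs1] using h
  -- covariance values
  have huu : ∀ i s, 1 ≤ i → i ≤ T → 1 ≤ s → s ≤ T →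
      ∫ ω, u i ω * u s ω ∂μ = if i = s then σu2 else 0 := by
    intro i s hi1 hi2 hs1 hs2
    by_cases h : i = s
    · subst h
      simp only [if_pos rfl]
      rw [← huvar i hi1 hi2]
      congr 1; funext ω; ring
    · rw [if_neg h]
      have := (hIuu i s hi1 hi2 hs1 hs2 h).integral_mul_eq_mul_integral
        (huL2 i hi1 hi2).1 (huL2 s hs1 hs2).1
      calc ∫ ω, u i ω * u s ω ∂μ = ∫ ω, (u i * u s) ω ∂μ := rfl
        _ = (∫ ω, u i ω ∂μ) * ∫ ω, u s ω ∂μ := this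
        _ = 0 := by rw [humean i hi1 hi2]; ring
  have hεu : ∀ i s, 1 ≤ i → i ≤ T → 1 ≤ s → s ≤ T →
      ∫ ω, ε i ω * u s ω ∂μ = 0 := by
    intro i s hi1 hi2 hs1 hs2
    have := (hIεu i s hi1 hi2 hs1 hs2).integral_mul_eq_mul_integral
      (hεL2 i hi1 hi2).1 (huL2 s hs1 hs2).1
    calc ∫ ω, ε i ω * u s ω ∂μ = ∫ ω, (ε i * u s) ω ∂μ := rfl
      _ = (∫ ω, ε i ω ∂μ) * ∫ ω, u s ω ∂μ := this
      _ = 0 := by rw [hεmean i hi1 hi2]; ring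
  -- the key covariance: E[Y_k u_s]
  have hg : ∀ k, k ≤ T → ∀ s, 1 ≤ s → s ≤ T →
      ∫ ω, Y k ω * u s ω ∂μ = if s ≤ k then τ * φ^(k-s) * σu2 else 0 := by
    intro k hk s hs1 hs2
    have hexp : ∀ ω, Y k ω * u s ω
        = M k * u s ω + ∑ i ∈ Icc 1 k, (φ^(k-i) * τ * (u i ω * u s ω)
            + φ^(k-i) * (ε i ω * u s ω)) := by
      intro ω
      rw [hrep k hk ω, add_mul, Finset.sum_mul]
      congr 1
      exact Finset.sum_congr rfl fun i _ => by ring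
    have hbound : ∀ i ∈ Icc 1 k, 1 ≤ i ∧ i ≤ T := fun i hi =>
      ⟨(Finset.mem_Icc.mp hi).1, le_trans (Finset.mem_Icc.mp hi).2 hk⟩
    have hint1 : Integrable (fun ω => M k * u s ω) μ :=
      ((huL2 s hs1 hs2).integrable one_le_two).const_mul _
    have hint2 : ∀ i ∈ Icc 1 k, Integrable (fun ω => φ^(k-i) * τ * (u i ω * u s ω)
        + φ^(k-i) * (ε i ω * u s ω)) μ := by
      intro i hi
      obtain ⟨h1, h2⟩ := hbound i hi
      exact ((aux_mul_int μ _ _ (huL2 i h1 h2) (huL2 s hs1 hs2)).const_mul _).add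
        ((aux_mul_int μ _ _ (hεL2 i h1 h2) (huL2 s hs1 hs2)).const_mul _)
    calc ∫ ω, Y k ω * u s ω ∂μ
        = ∫ ω, (M k * u s ω + ∑ i ∈ Icc 1 k, (φ^(k-i) * τ * (u i ω * u s ω)
            + φ^(k-i) * (ε i ω * u s ω))) ∂μ := by
          exact integral_congr_ae (Filter.Eventually.of_forall hexp)
      _ = M k * (∫ ω, u s ω ∂μ) + ∑ i ∈ Icc 1 k, (φ^(k-i) * τ * (∫ ω, u i ω * u s ω ∂μ)
            + φ^(k-i) * (∫ ω, ε i ω * u s ω ∂μ)) := by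
          rw [integral_add hint1 (integrable_finset_sum _ hint2), integral_const_mul,
            integral_finset_sum _ hint2]
          congr 1
          refine Finset.sum_congr rfl fun i hi => ?_
          obtain ⟨h1, h2⟩ := hbound i hi
          rw [integral_add (((aux_mul_int μ _ _ (huL2 i h1 h2) (huL2 s hs1 hs2)).const_mul _))
            ((aux_mul_int μ _ _ (hεL2 i h1 h2) (huL2 s hs1 hs2)).const_mul _),
            integral_const_mul, integral_const_mul]
      _ = ∑ i ∈ Icc 1 k, (if i = s then φ^(k-i) * τ * σu2 else 0) := by
          rw [humean s hs1 hs2, mul_zero, zero_add]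
          refine Finset.sum_congr rfl fun i hi => ?_
          obtain ⟨h1, h2⟩ := hbound i hi
          rw [huu i s h1 h2 hs1 hs2, hεu i s h1 h2 hs1 hs2, mul_zero, add_zero]
          by_cases h : i = s
          · rw [if_pos h, if_pos h]
          · rw [if_neg h, if_neg h, mul_zero]
      _ = if s ≤ k then τ * φ^(k-s) * σu2 else 0 := by
          rw [Finset.sum_ite_eq' (Icc 1 k) s (fun i => φ^(k-i) * τ * σu2)]
          by_cases h : s ≤ k
          · rw [if_pos (Finset.mem_Icc.mpr ⟨hs1, h⟩), if_pos h]; ring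
          · rw [if_neg (fun hc => h (Finset.mem_Icc.mp hc).2), if_neg h]
    -- pointwise expansion of the within-transformed product
  have hcard : (Icc 1 T).card = T := by simp
  have expand : (fun ω => (1 / (T : ℝ)) * ∑ t ∈ Icc 1 T,
        (Y (t - 1) ω - (1 / (T : ℝ)) * ∑ s ∈ Icc 1 T, Y (s - 1) ω)
          * (u t ω - (1 / (T : ℝ)) * ∑ s ∈ Icc 1 T, u s ω))
      = (fun ω => (1 / (T : ℝ)) * (∑ t ∈ Icc 1 T, Y (t-1) ω * u t ω)
        - (1 / (T : ℝ)^2) * ∑ s ∈ Icc 1 T, ∑ t ∈ Icc 1 T, Y (s-1) ω * u t ω) := by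
    funext ω
    have hAB : ∑ s ∈ Icc 1 T, ∑ t ∈ Icc 1 T, Y (s-1) ω * u t ω
        = (∑ s ∈ Icc 1 T, Y (s-1) ω) * (∑ t ∈ Icc 1 T, u t ω) := by
      rw [Finset.sum_mul_sum]
    rw [hAB]
    set A := ∑ s ∈ Icc 1 T, Y (s-1) ω with hA
    set B := ∑ s ∈ Icc 1 T, u s ω with hB
    have hexp : ∑ t ∈ Icc 1 T,
        (Y (t-1) ω - (1/(T:ℝ)) * A) * (u t ω - (1/(T:ℝ)) * B)
        = (∑ t ∈ Icc 1 T, Y (t-1) ω * u t ω) - (1/(T:ℝ))*A*B - (1/(T:ℝ))*B*A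
          + (T:ℝ) * ((1/(T:ℝ))*A*((1/(T:ℝ))*B)) := by
      have hpt : ∀ t ∈ Icc 1 T, (Y (t-1) ω - (1/(T:ℝ)) * A) * (u t ω - (1/(T:ℝ)) * B)
          = (Y (t-1) ω * u t ω - (1/(T:ℝ))*A * u t ω) - ((1/(T:ℝ))*B) * Y (t-1) ω
            + (1/(T:ℝ))*A*((1/(T:ℝ))*B) := fun t _ => by ring
      rw [Finset.sum_congr rfl hpt, Finset.sum_add_distrib, Finset.sum_sub_distrib,
        Finset.sum_sub_distrib, ← Finset.mul_sum, ← Finset.mul_sum, Finset.sum_const,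
        hcard, nsmul_eq_mul, ← hA, ← hB]
    rw [hexp]
    field_simp
    ring
  -- integrability
  have hint_t : ∀ t ∈ Icc 1 T, Integrable (fun ω => Y (t-1) ω * u t ω) μ := by
    intro t ht
    obtain ⟨h1, h2⟩ := Finset.mem_Icc.mp ht
    exact aux_mul_int μ _ _ (hYL2 (t-1) (by omega)) (huL2 t h1 h2)
  have hint_st : ∀ s ∈ Icc 1 T, ∀ t ∈ Icc 1 T,
      Integrable (fun ω => Y (s-1) ω * u t ω) μ := by
    intro s hs t ht
    obtain ⟨h1, h2⟩ := Finset.mem_Icc.mp ht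
    obtain ⟨h3, h4⟩ := Finset.mem_Icc.mp hs
    exact aux_mul_int μ _ _ (hYL2 (s-1) (by omega)) (huL2 t h1 h2)
  have hI1 : Integrable (fun ω => (1/(T:ℝ)) * (∑ t ∈ Icc 1 T, Y (t-1) ω * u t ω)) μ :=
    (integrable_finset_sum _ hint_t).const_mul _
  have hI2 : Integrable (fun ω =>
      (1/(T:ℝ)^2) * ∑ s ∈ Icc 1 T, ∑ t ∈ Icc 1 T, Y (s-1) ω * u t ω) μ :=
    (integrable_finset_sum _ fun s hs => integrable_finset_sum _ (hint_st s hs)).const_mul _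
  rw [expand, integral_sub hI1 hI2, integral_const_mul, integral_const_mul,
    integral_finset_sum _ hint_t,
    integral_finset_sum _ (fun s hs => integrable_finset_sum _ (hint_st s hs))]
  -- first sum vanishes
  have hfirst : ∑ t ∈ Icc 1 T, ∫ ω, Y (t-1) ω * u t ω ∂μ = 0 := by
    refine Finset.sum_eq_zero fun t ht => ?_
    obtain ⟨h1, h2⟩ := Finset.mem_Icc.mp ht
    rw [hg (t-1) (by omega) t h1 h2, if_neg (by omega)]
  -- second sum
  have hsecond : ∑ s ∈ Icc 1 T, ∫ ω, (∑ t ∈ Icc 1 T, Y (s-1) ω * u t ω) ∂μ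
      = τ * σu2 * ∑ l ∈ range (T-1), ∑ j ∈ range (l+1), φ ^ j := by
    have hstep : ∀ s ∈ Icc 1 T, ∫ ω, (∑ t ∈ Icc 1 T, Y (s-1) ω * u t ω) ∂μ
        = τ * σu2 * ∑ j ∈ range (s-1), φ ^ j := by
      intro s hs
      obtain ⟨h3, h4⟩ := Finset.mem_Icc.mp hs
      rw [integral_finset_sum _ (hint_st s hs)]
      have hval : ∀ t ∈ Icc 1 T, ∫ ω, Y (s-1) ω * u t ω ∂μ
          = if t ≤ s-1 then τ * φ^(s-1-t) * σu2 else 0 := by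
        intro t ht
        obtain ⟨h1, h2⟩ := Finset.mem_Icc.mp ht
        exact hg (s-1) (by omega) t h1 h2
      rw [Finset.sum_congr rfl hval, ← Finset.sum_filter]
      have hfil : Finset.filter (fun t => t ≤ s-1) (Icc 1 T) = Icc 1 (s-1) := by
        ext t
        simp only [Finset.mem_filter, Finset.mem_Icc]
        omega
      rw [hfil]
      have : ∀ t ∈ Icc 1 (s-1), τ * φ^(s-1-t) * σu2 = (τ*σu2) * φ^(s-1-t) :=
        fun t _ => by ring
      rw [Finset.sum_congr rfl this, ← Finset.mul_sum, aux_pow_sum]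
    rw [Finset.sum_congr rfl hstep, ← Finset.mul_sum, aux_reindex]
  rw [hfirst, hsecond]
  field_simp
  ring
end

section
/- Covariance of within-transformed treatment with the lagged outcome: for every t ∈ {1,…,T}, Cov(D_t − D̄, Y_{t-1}) = −(τ₀·σ²/T)·Σ_{s=1}^{t-1} ρ₁₀^{t-s-1}. -/
open Finset MeasureTheory ProbabilityTheory

/-- Covariance of two real random variables with respect to `μ`. -/
noncomputable def cov {Ω : Type*} [MeasurableSpace Ω] (μ : Measure Ω)
    (X Z : Ω → ℝ) : ℝ :=
  ∫ ω, (X ω - ∫ x, X x ∂μ) * (Z ω - ∫ x, Z x ∂μ) ∂μ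

lemma integrable_mul_of_memL2 {Ω : Type*} [MeasurableSpace Ω] {μ : Measure Ω}
    {X Z : Ω → ℝ} (hX : MemLp X 2 μ) (hZ : MemLp Z 2 μ) :
    Integrable (fun ω => X ω * Z ω) μ := by
  have h : MemLp (X • Z) 1 μ := hZ.smul hX
  exact memLp_one_iff_integrable.mp h

lemma cov_eq_sub {Ω : Type*} [MeasurableSpace Ω] (μ : Measure Ω) [IsProbabilityMeasure μ]
    {X Z : Ω → ℝ} (hX : MemLp X 2 μ) (hZ : MemLp Z 2 μ) :
    cov μ X Z = (∫ ω, X ω * Z ω ∂μ) - (∫ ω, X ω ∂μ) * (∫ ω, Z ω ∂μ) := by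
  have hXi : Integrable X μ := hX.integrable one_le_two
  have hZi : Integrable Z μ := hZ.integrable one_le_two
  set EX := ∫ ω, X ω ∂μ
  set EZ := ∫ ω, Z ω ∂μ
  have h1 : ∀ ω, (X ω - EX) * (Z ω - EZ)
      = X ω * Z ω - EX * Z ω - EZ * X ω + EX * EZ := by intro ω; ring
  have hXZ : Integrable (fun ω => X ω * Z ω) μ := integrable_mul_of_memL2 hX hZ
  have hi3 : Integrable (fun ω => X ω * Z ω - EX * Z ω - EZ * X ω) μ :=
    (hXZ.sub (hZi.const_mul EX)).sub (hXi.const_mul EZ)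
  have hi2 : Integrable (fun ω => X ω * Z ω - EX * Z ω) μ := hXZ.sub (hZi.const_mul EX)
  rw [cov]
  change ∫ ω, (X ω - EX) * (Z ω - EZ) ∂μ = _
  simp_rw [h1]
  rw [integral_add hi3 (integrable_const _), integral_sub hi2 (hXi.const_mul EZ),
    integral_sub hXZ (hZi.const_mul EX), integral_const_mul, integral_const_mul,
    integral_const]
  simp only [measure_univ, ENNReal.toReal_one, smul_eq_mul, one_mul, probReal_univ]
  ring

/-- Covariance of within-transformed treatment with the lagged outcome: for every
`t ∈ {1,…,T}`, `Cov(D_t − D̄, Y_{t-1}) = −(τ₀·σ²/T)·Σ_{s=1}^{t-1} ρ₁₀^{t-s-1}`. -/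
theorem within_treatment_lagged_outcome_cov {Ω : Type*} [MeasurableSpace Ω]
    (μ : Measure Ω) [IsProbabilityMeasure μ] (T : ℕ) (hT : 2 ≤ T)
    (τ₀ ρ₁₀ a c Y₀ σ2 : ℝ)
    (ε u : ℕ → Ω → ℝ)
    (hεmeas : ∀ t, Measurable (ε t)) (humeas : ∀ t, Measurable (u t))
    (hεL2 : ∀ t : ℕ, 1 ≤ t → t ≤ T → MemLp (ε t) 2 μ)
    (huL2 : ∀ t : ℕ, 1 ≤ t → t ≤ T → MemLp (u t) 2 μ)
    (hindep : iIndepFun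
      (Sum.elim (fun t : Fin T => ε (t + 1)) (fun t : Fin T => u (t + 1))) μ)
    (hεmean : ∀ t : ℕ, 1 ≤ t → t ≤ T → ∫ ω, ε t ω ∂μ = 0)
    (humean : ∀ t : ℕ, 1 ≤ t → t ≤ T → ∫ ω, u t ω ∂μ = 0)
    (huvar : ∀ t : ℕ, 1 ≤ t → t ≤ T → ∫ ω, (u t ω) ^ 2 ∂μ = σ2)
    (Y D : ℕ → Ω → ℝ) (hY0 : ∀ ω, Y 0 ω = Y₀)
    (hD : ∀ t : ℕ, 1 ≤ t → t ≤ T → ∀ ω, D t ω = c + u t ω)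
    (hY : ∀ t : ℕ, 1 ≤ t → t ≤ T → ∀ ω,
      Y t ω = a + τ₀ * D t ω + ρ₁₀ * Y (t - 1) ω + ε t ω) :
    ∀ t : ℕ, 1 ≤ t → t ≤ T →
      cov μ (fun ω => D t ω - (1 / (T : ℝ)) * ∑ s ∈ Icc 1 T, D s ω) (Y (t - 1))
        = -(τ₀ * σ2 / (T : ℝ)) * ∑ s ∈ Icc 1 (t - 1), ρ₁₀ ^ (t - s - 1) := by
  intro t ht1 htT
  have hTne : (T : ℝ) ≠ 0 := by positivity
  set k := t - 1 with hkdef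
  have hkT : k ≤ T := by omega
  have hkt : k < t := by omega
  -- independence consequences
  have hiuu : ∀ s r : ℕ, 1 ≤ s → s ≤ T → 1 ≤ r → r ≤ T → s ≠ r →
      IndepFun (u s) (u r) μ := by
    intro s r hs1 hsT hr1 hrT hsr
    have h := hindep.indepFun (i := Sum.inr ⟨s - 1, by omega⟩)
      (j := Sum.inr ⟨r - 1, by omega⟩)
      (by simp only [ne_eq, Sum.inr.injEq, Fin.mk.injEq]; omega)
    simpa only [Sum.elim_inr, Nat.sub_add_cancel hs1, Nat.sub_add_cancel hr1] using h
  have hiuε : ∀ s r : ℕ, 1 ≤ s → s ≤ T → 1 ≤ r → r ≤ T →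
      IndepFun (u s) (ε r) μ := by
    intro s r hs1 hsT hr1 hrT
    have h := hindep.indepFun (i := Sum.inr ⟨s - 1, by omega⟩)
      (j := Sum.inl ⟨r - 1, by omega⟩) (by simp)
    simpa only [Sum.elim_inr, Sum.elim_inl, Nat.sub_add_cancel hs1,
      Nat.sub_add_cancel hr1] using h
  have huu0 : ∀ s r : ℕ, 1 ≤ s → s ≤ T → 1 ≤ r → r ≤ T → s ≠ r →
      ∫ ω, u s ω * u r ω ∂μ = 0 := by
    intro s r hs1 hsT hr1 hrT hsr
    have h := (hiuu s r hs1 hsT hr1 hrT hsr).integral_fun_mul_eq_mul_integral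
      (huL2 s hs1 hsT).1 (huL2 r hr1 hrT).1
    simpa [Pi.mul_apply, humean s hs1 hsT, humean r hr1 hrT] using h
  have huε0 : ∀ s r : ℕ, 1 ≤ s → s ≤ T → 1 ≤ r → r ≤ T →
      ∫ ω, u s ω * ε r ω ∂μ = 0 := by
    intro s r hs1 hsT hr1 hrT
    have h := (hiuε s r hs1 hsT hr1 hrT).integral_fun_mul_eq_mul_integral
      (huL2 s hs1 hsT).1 (hεL2 r hr1 hrT).1
    simpa [Pi.mul_apply, humean s hs1 hsT, hεmean r hr1 hrT] using h
  have huusq : ∀ s : ℕ, 1 ≤ s → s ≤ T → ∫ ω, u s ω * u s ω ∂μ = σ2 := by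
    intro s hs1 hsT
    simpa [sq] using huvar s hs1 hsT
  -- the within-transformed treatment
  set X : Ω → ℝ := fun ω => u t ω - (1 / (T : ℝ)) * ∑ s ∈ Icc 1 T, u s ω with hXdef
  have hXeq : (fun ω => D t ω - (1 / (T : ℝ)) * ∑ s ∈ Icc 1 T, D s ω) = X := by
    funext ω
    rw [hD t ht1 htT ω, hXdef]
    rw [Finset.sum_congr rfl (fun s hs => hD s (mem_Icc.1 hs).1 (mem_Icc.1 hs).2 ω)]
    rw [Finset.sum_add_distrib, Finset.sum_const, Nat.card_Icc]
    simp only [Nat.add_sub_cancel, nsmul_eq_mul]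
    field_simp
    ring
  -- closed form for Y
  set g : ℕ → ℝ := fun n => Nat.rec Y₀ (fun _ p => a + τ₀ * c + ρ₁₀ * p) n with hgdef
  have hYcf : ∀ n : ℕ, n ≤ T → ∀ ω,
      Y n ω = g n + ∑ r ∈ Icc 1 n, ρ₁₀ ^ (n - r) * (τ₀ * u r ω + ε r ω) := by
    intro n
    induction n with
    | zero => intro _ ω; simp [hY0 ω, hgdef]
    | succ m ih =>
      intro hm ω
      have hm' : m ≤ T := by omega
      rw [hY (m + 1) (by omega) hm ω, hD (m + 1) (by omega) hm ω]
      simp only [Nat.add_sub_cancel]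
      rw [ih hm' ω]
      rw [Finset.sum_Icc_succ_top (by omega : 1 ≤ m + 1)]
      have hsum : ∑ r ∈ Icc 1 m, ρ₁₀ ^ (m + 1 - r) * (τ₀ * u r ω + ε r ω)
          = ρ₁₀ * ∑ r ∈ Icc 1 m, ρ₁₀ ^ (m - r) * (τ₀ * u r ω + ε r ω) := by
        rw [Finset.mul_sum]
        refine Finset.sum_congr rfl fun r hr => ?_
        have hrm : r ≤ m := (mem_Icc.1 hr).2
        have : m + 1 - r = (m - r) + 1 := by omega
        rw [this, pow_succ]
        ring
      rw [hsum]
      simp only [Nat.sub_self, pow_zero, one_mul, Nat.add_sub_cancel]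
      show _ = (fun p => a + τ₀ * c + ρ₁₀ * p) (g m) + _
      ring
  -- L2 memberships
  have hX2 : MemLp X 2 μ := by
    refine (huL2 t ht1 htT).sub ?_
    exact (memLp_finset_sum _ fun s hs =>
      huL2 s (mem_Icc.1 hs).1 (mem_Icc.1 hs).2).const_mul _
  have hS2 : ∀ r : ℕ, 1 ≤ r → r ≤ T → ∀ b : ℝ,
      MemLp (fun ω => b * (τ₀ * u r ω + ε r ω)) 2 μ := fun r hr1 hrT b =>
    (((huL2 r hr1 hrT).const_mul τ₀).add (hεL2 r hr1 hrT)).const_mul b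
  have hZ2 : MemLp (Y k) 2 μ := by
    have : Y k = fun ω => g k + ∑ r ∈ Icc 1 k, ρ₁₀ ^ (k - r) * (τ₀ * u r ω + ε r ω) := by
      funext ω; exact hYcf k hkT ω
    rw [this]
    exact (memLp_const (g k)).add (memLp_finset_sum _ fun r hr =>
      hS2 r (mem_Icc.1 hr).1 (le_trans (mem_Icc.1 hr).2 hkT) _)
  -- mean of X is zero
  have hXint : Integrable X μ := hX2.integrable one_le_two
  have hEX : ∫ ω, X ω ∂μ = 0 := by
    rw [hXdef]
    rw [integral_sub ((huL2 t ht1 htT).integrable one_le_two)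
      ((integrable_finset_sum _ fun s hs =>
        (huL2 s (mem_Icc.1 hs).1 (mem_Icc.1 hs).2).integrable one_le_two).const_mul _)]
    rw [integral_const_mul, integral_finset_sum _ fun s hs =>
      (huL2 s (mem_Icc.1 hs).1 (mem_Icc.1 hs).2).integrable one_le_two]
    rw [Finset.sum_congr rfl fun s hs => humean s (mem_Icc.1 hs).1 (mem_Icc.1 hs).2,
      humean t ht1 htT]
    simp
  -- key integral: ∫ X·W
  have hXW : ∀ W : Ω → ℝ, MemLp W 2 μ →
      ∫ ω, X ω * W ω ∂μ = (∫ ω, u t ω * W ω ∂μ)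
        - (1 / (T : ℝ)) * ∑ s ∈ Icc 1 T, ∫ ω, u s ω * W ω ∂μ := by
    intro W hW
    have h1 : ∀ ω, X ω * W ω
        = u t ω * W ω - (1 / (T : ℝ)) * ∑ s ∈ Icc 1 T, u s ω * W ω := by
      intro ω
      rw [hXdef]
      simp only
      rw [sub_mul, mul_assoc, Finset.sum_mul]
    simp_rw [h1]
    rw [integral_sub (integrable_mul_of_memL2 (huL2 t ht1 htT) hW)
      ((integrable_finset_sum _ fun s hs =>
        integrable_mul_of_memL2 (huL2 s (mem_Icc.1 hs).1 (mem_Icc.1 hs).2) hW).const_mul _),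
      integral_const_mul, integral_finset_sum _ fun s hs =>
        integrable_mul_of_memL2 (huL2 s (mem_Icc.1 hs).1 (mem_Icc.1 hs).2) hW]
  -- ∫ X·u_r = -σ2/T for 1 ≤ r ≤ k
  have hXu : ∀ r : ℕ, 1 ≤ r → r ≤ k → ∫ ω, X ω * u r ω ∂μ = -(σ2 / (T : ℝ)) := by
    intro r hr1 hrk
    have hrT : r ≤ T := le_trans hrk hkT
    rw [hXW (u r) (huL2 r hr1 hrT)]
    rw [huu0 t r ht1 htT hr1 hrT (by omega)]
    rw [Finset.sum_eq_single_of_mem r (mem_Icc.2 ⟨hr1, hrT⟩)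
      (fun s hs hsr => huu0 s r (mem_Icc.1 hs).1 (mem_Icc.1 hs).2 hr1 hrT hsr)]
    rw [huusq r hr1 hrT]
    field_simp
    ring
  have hXε : ∀ r : ℕ, 1 ≤ r → r ≤ k → ∫ ω, X ω * ε r ω ∂μ = 0 := by
    intro r hr1 hrk
    have hrT : r ≤ T := le_trans hrk hkT
    rw [hXW (ε r) (hεL2 r hr1 hrT)]
    rw [huε0 t r ht1 htT hr1 hrT]
    rw [Finset.sum_congr rfl fun s hs =>
      huε0 s r (mem_Icc.1 hs).1 (mem_Icc.1 hs).2 hr1 hrT]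
    simp
  -- main computation
  rw [hXeq, cov_eq_sub μ hX2 hZ2, hEX, zero_mul, sub_zero]
  have hZeq : ∀ ω, X ω * Y k ω = g k * X ω
      + ∑ r ∈ Icc 1 k, (ρ₁₀ ^ (k - r) * τ₀ * (X ω * u r ω)
          + ρ₁₀ ^ (k - r) * (X ω * ε r ω)) := by
    intro ω
    rw [hYcf k hkT ω, mul_add, mul_comm (X ω) (g k)]
    congr 1
    rw [Finset.mul_sum]
    refine Finset.sum_congr rfl fun r hr => ?_
    ring
  simp_rw [hZeq]
  have hint1 : ∀ r ∈ Icc 1 k, Integrable (fun ω =>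
      ρ₁₀ ^ (k - r) * τ₀ * (X ω * u r ω) + ρ₁₀ ^ (k - r) * (X ω * ε r ω)) μ := by
    intro r hr
    obtain ⟨hr1, hrk⟩ := mem_Icc.1 hr
    have hrT : r ≤ T := le_trans hrk hkT
    exact ((integrable_mul_of_memL2 hX2 (huL2 r hr1 hrT)).const_mul _).add
      ((integrable_mul_of_memL2 hX2 (hεL2 r hr1 hrT)).const_mul _)
  rw [integral_add (hXint.const_mul _) (integrable_finset_sum _ hint1),
    integral_const_mul, hEX, mul_zero, zero_add, integral_finset_sum _ hint1]
  have hterm : ∀ r ∈ Icc 1 k, (∫ ω, (ρ₁₀ ^ (k - r) * τ₀ * (X ω * u r ω)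
      + ρ₁₀ ^ (k - r) * (X ω * ε r ω)) ∂μ)
      = -(τ₀ * σ2 / (T : ℝ)) * ρ₁₀ ^ (k - r) := by
    intro r hr
    obtain ⟨hr1, hrk⟩ := mem_Icc.1 hr
    have hrT : r ≤ T := le_trans hrk hkT
    rw [integral_add ((integrable_mul_of_memL2 hX2 (huL2 r hr1 hrT)).const_mul _)
      ((integrable_mul_of_memL2 hX2 (hεL2 r hr1 hrT)).const_mul _),
      integral_const_mul, integral_const_mul, hXu r hr1 hrk, hXε r hr1 hrk]
    ring
  rw [Finset.sum_congr rfl hterm, ← Finset.mul_sum]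
  congr 1
  refine Finset.sum_congr rfl fun s hs => ?_
  congr 1
  omega
end
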